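/- Let P ≥ 1 and M ≥ 1, let A : ℝ^P → ℝ^M be a linear map, let Γ be a symmetric positive definite M × M real matrix, and let y ∈ ℝ^M. Define Φ(u) = (1/2) ⟨Γ^{-1}(y − Au), y − Au⟩, so that ∇Φ(u) = Aᵀ Γ^{-1}(Au − y). Let J ≥ 1, let u^{(1)},…,u^{(J)} ∈ ℝ^P, set ū = (1/J) Σ_{l=1}^J u^{(l)}, Ḡ = (1/J) Σ_{l=1}^J A u^{(l)}, and let C(u) : ℝ^P → ℝ^P be the empirical covariance operator C(u) v = (1/J) Σ_{k=1}^J ⟨u^{(k)} − ū, v⟩ (u^{(k)} − ū). Then for every j ∈ {1,…,J}, the Ensemble Kalman Inversion drift satisfies −(1/J) Σ_{k=1}^J ⟨A u^{(k)} − Ḡ, Γ^{-1}(A u^{(j)} − y)⟩ u^{(k)} = −C(u) ∇Φ(u^{(j)}). -/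

import Mathlib

open Finset Matrix

/-- In the linear case `G(u) = Au` with Gaussian noise covariance
`Γ`, the EKI drift is a preconditioned gradient descent for
`Φ(u) = (1/2)⟨Γ⁻¹(y − Au), y − Au⟩` (whose gradient is
`∇Φ(u) = Aᵀ Γ⁻¹(Au − y)`), with preconditioner the empirical covariance
`C(u)v = (1/J) ∑_k ⟨u^{(k)} − ū, v⟩ (u^{(k)} − ū)`:
`−(1/J) ∑_k ⟨Au^{(k)} − Ḡ, Γ⁻¹(Au^{(j)} − y)⟩ u^{(k)} = −C(u)∇Φ(u^{(j)})`. -/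
theorem eki_linear_precond_gradient_descent {P M : ℕ} (hP : 1 ≤ P) (hM : 1 ≤ M)
    (A : Matrix (Fin M) (Fin P) ℝ)
    (Γ : Matrix (Fin M) (Fin M) ℝ) (hΓ : Γ.PosDef)
    (y : Fin M → ℝ)
    (Phi : (Fin P → ℝ) → ℝ)
    (hPhi : ∀ v, Phi v = (1 / 2) * ((Γ⁻¹ *ᵥ (y - A *ᵥ v)) ⬝ᵥ (y - A *ᵥ v)))
    (gradPhi : (Fin P → ℝ) → (Fin P → ℝ))
    (hgradPhi : ∀ v, gradPhi v = Aᵀ *ᵥ (Γ⁻¹ *ᵥ (A *ᵥ v - y)))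
    {J : ℕ} (hJ : 1 ≤ J) (u : Fin J → (Fin P → ℝ))
    (ubar : Fin P → ℝ) (hubar : ubar = (1 / J : ℝ) • ∑ l, u l)
    (Gbar : Fin M → ℝ) (hGbar : Gbar = (1 / J : ℝ) • ∑ l, A *ᵥ u l)
    (C : (Fin P → ℝ) → (Fin P → ℝ))
    (hC : ∀ v, C v = (1 / J : ℝ) • ∑ k, ((u k - ubar) ⬝ᵥ v) • (u k - ubar)) :
    ∀ j, -((1 / J : ℝ) • ∑ k, ((A *ᵥ u k - Gbar) ⬝ᵥ (Γ⁻¹ *ᵥ (A *ᵥ u j - y))) • u k)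
      = -(C (gradPhi (u j))) := by
  intro j
  have hJ0 : (J : ℝ) ≠ 0 := by positivity
  set w : Fin M → ℝ := Γ⁻¹ *ᵥ (A *ᵥ u j - y) with hw
  -- A applied to the mean is the mean of A applied
  have hAubar : A *ᵥ ubar = Gbar := by
    rw [hubar, hGbar, Matrix.mulVec_smul]
    congr 1
    exact map_sum A.mulVecLin u Finset.univ
  -- the inner products in C (gradPhi) coincide with those in the drift
  have hdot : ∀ k : Fin J, (u k - ubar) ⬝ᵥ gradPhi (u j)
      = (A *ᵥ u k - Gbar) ⬝ᵥ w := by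
    intro k
    rw [hgradPhi, ← hw, Matrix.dotProduct_mulVec, Matrix.vecMul_transpose,
      Matrix.mulVec_sub, hAubar]
  -- the coefficients sum to zero
  have hsum0 : ∑ k, (A *ᵥ u k - Gbar) ⬝ᵥ w = 0 := by
    have key : ∑ k, (A *ᵥ u k - Gbar) ⬝ᵥ w = (∑ k, (A *ᵥ u k - Gbar)) ⬝ᵥ w := by
      simp only [dotProduct, Finset.sum_apply, Finset.sum_mul]
      rw [Finset.sum_comm]
    rw [key]
    have : ∑ k : Fin J, (A *ᵥ u k - Gbar) = 0 := by
      rw [Finset.sum_sub_distrib, Finset.sum_const, Finset.card_fin, hGbar,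
        ← Nat.cast_smul_eq_nsmul ℝ, smul_smul, mul_one_div, div_self hJ0, one_smul,
        sub_self]
    rw [this, zero_dotProduct]
  congr 1
  rw [hC]
  congr 1
  symm
  calc ∑ k, ((u k - ubar) ⬝ᵥ gradPhi (u j)) • (u k - ubar)
      = ∑ k, ((A *ᵥ u k - Gbar) ⬝ᵥ w) • (u k - ubar) := by
        exact Finset.sum_congr rfl fun k _ => by rw [hdot k]
    _ = ∑ k, ((A *ᵥ u k - Gbar) ⬝ᵥ w) • u k
        - (∑ k, (A *ᵥ u k - Gbar) ⬝ᵥ w) • ubar := by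
        rw [Finset.sum_smul]
        rw [← Finset.sum_sub_distrib]
        exact Finset.sum_congr rfl fun k _ => smul_sub _ _ _
    _ = ∑ k, ((A *ᵥ u k - Gbar) ⬝ᵥ w) • u k := by
        rw [hsum0, zero_smul, sub_zero]
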